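/- Let k ≥ 2 and let φ : U → V be a C^{k-1} diffeomorphism between open subsets of ℝⁿ. If φ has a Taylor expansion of order k at a point x ∈ U (i.e., there is a polynomial P of degree ≤ k with φ(x+h) - P(h) = o(|h|^k)), then the inverse φ⁻¹ has a Taylor expansion of order k at y = φ(x). -/

import Mathlib

open MeasureTheory Asymptotics Filter

noncomputable def polyEval {n m : ℕ} (P : Fin m → MvPolynomial (Fin n) ℝ)
    (x : Fin n → ℝ) : Fin m → ℝ :=
  fun i => MvPolynomial.eval x (P i)

/-- `f` has a Taylor expansion of order `k` at `x`: there is a polynomial map of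
degree at most `k` approximating `f` near `x` up to `o(|h|^k)`. -/
def HasTaylorExpansionAt {n m : ℕ} (f : (Fin n → ℝ) → (Fin m → ℝ)) (k : ℕ)
    (x : Fin n → ℝ) : Prop :=
  ∃ P : Fin m → MvPolynomial (Fin n) ℝ, (∀ i, (P i).totalDegree ≤ k) ∧
    (fun h => f (x + h) - polyEval P h) =o[nhds 0] fun h => ‖h‖ ^ k

section Aux

open MvPolynomial

/-! ### Auxiliary lemmas about polynomial evaluation -/

lemma contDiff_evalPoly {n : ℕ} (p : MvPolynomial (Fin n) ℝ) :
    ContDiff ℝ ⊤ (fun x : Fin n → ℝ => MvPolynomial.eval x p) := by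
  rw [contDiff_iff_contDiffAt]
  intro x
  exact ((AnalyticOnNhd.eval_continuousLinearMap (ContinuousLinearMap.id ℝ (Fin n → ℝ)) p) x
    (Set.mem_univ x)).contDiffAt

lemma contDiff_polyEval {n m : ℕ} (P : Fin m → MvPolynomial (Fin n) ℝ) :
    ContDiff ℝ ⊤ (polyEval P) := by
  rw [contDiff_pi]
  exact fun i => contDiff_evalPoly (P i)

noncomputable def linPoly {n : ℕ} (A : (Fin n → ℝ) →L[ℝ] (Fin n → ℝ)) :
    Fin n → MvPolynomial (Fin n) ℝ :=
  fun i => ∑ j, MvPolynomial.C (A (Pi.single j 1) i) * MvPolynomial.X j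

lemma polyEval_linPoly {n : ℕ} (A : (Fin n → ℝ) →L[ℝ] (Fin n → ℝ)) (u : Fin n → ℝ) :
    polyEval (linPoly A) u = A u := by
  funext i
  have hu : u = ∑ j, u j • (Pi.single j 1 : Fin n → ℝ) := by
    funext j'
    simp [Pi.single_apply, Finset.sum_apply]
  simp only [polyEval, linPoly, map_sum, eval_mul, eval_C, eval_X]
  conv_rhs => rw [hu]
  rw [map_sum]
  simp [Finset.sum_apply, mul_comm]

noncomputable def iterPoly {n : ℕ} (B : (Fin n → ℝ) →L[ℝ] (Fin n → ℝ))
    (R : Fin n → MvPolynomial (Fin n) ℝ) : ℕ → Fin n → MvPolynomial (Fin n) ℝ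
  | 0 => fun _ => 0
  | (j+1) => fun i =>
      MvPolynomial.bind₁
        (fun i' => MvPolynomial.X i' - MvPolynomial.bind₁ (iterPoly B R j) (R i'))
        (linPoly B i)

lemma eval_bind₁' {n : ℕ} (G : Fin n → MvPolynomial (Fin n) ℝ) (p : MvPolynomial (Fin n) ℝ)
    (u : Fin n → ℝ) :
    MvPolynomial.eval u (MvPolynomial.bind₁ G p)
      = MvPolynomial.eval (fun j => MvPolynomial.eval u (G j)) p := by
  simpa using MvPolynomial.aeval_bind₁ (R := ℝ) (S := ℝ) u G p

lemma polyEval_iterPoly_zero {n : ℕ} (B : (Fin n → ℝ) →L[ℝ] (Fin n → ℝ))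
    (R : Fin n → MvPolynomial (Fin n) ℝ) (u : Fin n → ℝ) :
    polyEval (iterPoly B R 0) u = 0 := by
  funext i; simp [polyEval, iterPoly]

lemma polyEval_iterPoly_succ {n : ℕ} (B : (Fin n → ℝ) →L[ℝ] (Fin n → ℝ))
    (R : Fin n → MvPolynomial (Fin n) ℝ) (j : ℕ) (u : Fin n → ℝ) :
    polyEval (iterPoly B R (j+1)) u
      = B (u - polyEval R (polyEval (iterPoly B R j) u)) := by
  have := polyEval_linPoly B (u - polyEval R (polyEval (iterPoly B R j) u))
  rw [← this]
  funext i
  simp only [polyEval, iterPoly, eval_bind₁']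
  have harg : (fun j' => MvPolynomial.eval u
      (MvPolynomial.X j' - MvPolynomial.bind₁ (iterPoly B R j) (R j')))
      = u - polyEval R (polyEval (iterPoly B R j) u) := by
    funext j'
    simp only [eval_sub, eval_X, eval_bind₁', Pi.sub_apply]; rfl
  rw [harg]

/-! ### Truncation -/

noncomputable def mdeg {n : ℕ} (α : Fin n →₀ ℕ) : ℕ := α.sum fun _ e => e

noncomputable def truncP {n : ℕ} (k : ℕ) (p : MvPolynomial (Fin n) ℝ) :
    MvPolynomial (Fin n) ℝ :=
  ∑ α ∈ p.support.filter (fun α => mdeg α ≤ k), MvPolynomial.monomial α (MvPolynomial.coeff α p)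

lemma totalDegree_truncP {n : ℕ} (k : ℕ) (p : MvPolynomial (Fin n) ℝ) :
    (truncP k p).totalDegree ≤ k := by
  refine le_trans (MvPolynomial.totalDegree_finset_sum _ _) ?_
  refine Finset.sup_le fun α hα => ?_
  refine le_trans (MvPolynomial.totalDegree_monomial_le _ _) ?_
  exact (Finset.mem_filter.mp hα).2

lemma coeff_truncP {n : ℕ} (k : ℕ) (p : MvPolynomial (Fin n) ℝ) (α : Fin n →₀ ℕ) :
    MvPolynomial.coeff α (truncP k p) = if mdeg α ≤ k then MvPolynomial.coeff α p else 0 := by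
  rw [truncP, MvPolynomial.coeff_sum]
  simp only [MvPolynomial.coeff_monomial]
  rw [Finset.sum_congr rfl (fun β hβ => by
    by_cases h : β = α
    · subst h; rfl
    · simp [h] : ∀ β ∈ p.support.filter (fun α => mdeg α ≤ k),
        (if β = α then MvPolynomial.coeff β p else 0)
          = (if β = α then MvPolynomial.coeff α p else 0))]
  rw [Finset.sum_ite_eq' (p.support.filter (fun α => mdeg α ≤ k)) α (fun _ => MvPolynomial.coeff α p)]
  by_cases h : mdeg α ≤ k
  · by_cases hs : α ∈ p.support
    · simp [Finset.mem_filter, h, hs]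
    · simp only [MvPolynomial.mem_support_iff, not_not] at hs
      simp [Finset.mem_filter, h, hs]
  · simp [Finset.mem_filter, h]

lemma abs_eval_le {n : ℕ} (q : MvPolynomial (Fin n) ℝ) (m : ℕ)
    (hq : ∀ α ∈ q.support, m ≤ mdeg α) (u : Fin n → ℝ) (hu : ‖u‖ ≤ 1) :
    |MvPolynomial.eval u q| ≤ (∑ α ∈ q.support, |MvPolynomial.coeff α q|) * ‖u‖ ^ m := by
  rw [MvPolynomial.eval_eq, Finset.sum_mul]
  refine le_trans (Finset.abs_sum_le_sum_abs _ _) (Finset.sum_le_sum fun α hα => ?_)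
  rw [abs_mul]
  refine mul_le_mul_of_nonneg_left ?_ (abs_nonneg _)
  have h1 : |∏ i ∈ α.support, u i ^ α i| ≤ ‖u‖ ^ mdeg α := by
    rw [Finset.abs_prod]
    have : ‖u‖ ^ mdeg α = ∏ i ∈ α.support, ‖u‖ ^ α i := by
      rw [mdeg, Finsupp.sum, ← Finset.prod_pow_eq_pow_sum]
    rw [this]
    refine Finset.prod_le_prod (fun _ _ => abs_nonneg _) fun i _ => ?_
    rw [abs_pow]
    exact pow_le_pow_left₀ (abs_nonneg _) (norm_le_pi_norm u i) _
  refine le_trans h1 ?_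
  exact pow_le_pow_of_le_one (norm_nonneg _) hu (hq α hα)

/-! ### A quadratic Lipschitz estimate -/

lemma quad_lipschitz {n : ℕ} (f : (Fin n → ℝ) → (Fin n → ℝ))
    (hf : ContDiff ℝ ⊤ f) (hd0 : fderiv ℝ f 0 = 0) :
    ∃ δ > (0:ℝ), ∃ L ≥ (0:ℝ), ∀ a b : Fin n → ℝ, ‖a‖ ≤ δ → ‖b‖ ≤ δ →
      ‖f a - f b‖ ≤ L * max ‖a‖ ‖b‖ * ‖a - b‖ := by
  have hg : ContDiffAt ℝ 1 (fderiv ℝ f) 0 :=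
    ((hf.fderiv_right (le_top)).contDiffAt (x := 0)).of_le le_top
  obtain ⟨K, t, ht, hlip⟩ := hg.exists_lipschitzOnWith
  obtain ⟨δ, hδpos, hδt⟩ := Metric.mem_nhds_iff.mp ht
  refine ⟨δ/2, by positivity, K, K.coe_nonneg, fun a b ha hb => ?_⟩
  have hball : ∀ z : Fin n → ℝ, ‖z‖ ≤ δ/2 → ‖fderiv ℝ f z‖ ≤ K * ‖z‖ := by
    intro z hz
    have hzt : z ∈ t := hδt (by simpa [Metric.mem_ball] using lt_of_le_of_lt hz (by linarith))
    have h0t : (0 : Fin n → ℝ) ∈ t := hδt (by simp [Metric.mem_ball, hδpos])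
    have := hlip.norm_sub_le hzt h0t
    simpa [hd0, dist_eq_norm] using this
  set r := max ‖a‖ ‖b‖ with hr
  have hrδ : r ≤ δ/2 := max_le ha hb
  have key := Convex.norm_image_sub_le_of_norm_fderiv_le
    (f := f) (s := Metric.closedBall (0 : Fin n → ℝ) r)
    (fun z _ => hf.differentiable (by simp) z)
    (fun z hz => by
      have hzr : ‖z‖ ≤ r := by simpa [dist_eq_norm] using Metric.mem_closedBall.mp hz
      calc ‖fderiv ℝ f z‖ ≤ K * ‖z‖ := hball z (le_trans hzr hrδ)
        _ ≤ K * r := by nlinarith [K.coe_nonneg, norm_nonneg z])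
    (convex_closedBall _ _)
    (Metric.mem_closedBall.mpr (by rw [dist_eq_norm, sub_zero, hr]; exact le_max_right _ _))
    (Metric.mem_closedBall.mpr (by rw [dist_eq_norm, sub_zero, hr]; exact le_max_left _ _))
  calc ‖f a - f b‖ ≤ K * r * ‖a - b‖ := key
    _ = K * max ‖a‖ ‖b‖ * ‖a - b‖ := by rw [hr]

end Aux

set_option maxHeartbeats 1000000 in
theorem inverse_has_taylor_expansion
    (n k : ℕ) (hk : 2 ≤ k) (U V : Set (Fin n → ℝ)) (hU : IsOpen U) (hV : IsOpen V)
    (φ ψ : (Fin n → ℝ) → (Fin n → ℝ))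
    (hφU : Set.MapsTo φ U V) (hψV : Set.MapsTo ψ V U)
    (hleft : ∀ x ∈ U, ψ (φ x) = x) (hright : ∀ y ∈ V, φ (ψ y) = y)
    (hφ : ContDiffOn ℝ (k - 1 : ℕ) φ U) (hψ : ContDiffOn ℝ (k - 1 : ℕ) ψ V)
    (x : Fin n → ℝ) (hx : x ∈ U)
    (hTaylor : HasTaylorExpansionAt φ k x) :
    HasTaylorExpansionAt ψ k (φ x) := by
  classical
  obtain ⟨P, hPdeg, he⟩ := hTaylor
  have hyV : φ x ∈ V := hφU hx
  have hk1 : (1 : WithTop ℕ∞) ≤ ((k - 1 : ℕ) : WithTop ℕ∞) := by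
    exact_mod_cast (by omega : 1 ≤ k - 1)
  have hφat : ContDiffAt ℝ (k - 1 : ℕ) φ x := hφ.contDiffAt (hU.mem_nhds hx)
  have hψat : ContDiffAt ℝ (k - 1 : ℕ) ψ (φ x) := hψ.contDiffAt (hV.mem_nhds hyV)
  have hφd : DifferentiableAt ℝ φ x := hφat.differentiableAt (lt_of_lt_of_le zero_lt_one hk1).ne'
  have hψd : DifferentiableAt ℝ ψ (φ x) := hψat.differentiableAt (lt_of_lt_of_le zero_lt_one hk1).ne'
  set A := fderiv ℝ φ x with hAdef
  set B := fderiv ℝ ψ (φ x) with hBdef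
  have hA : HasFDerivAt φ A x := hφd.hasFDerivAt
  have hB : HasFDerivAt ψ B (φ x) := hψd.hasFDerivAt
  -- B ∘ A = id
  have hBA : ∀ v, B (A v) = v := by
    have hcomp : HasFDerivAt (ψ ∘ φ) (B.comp A) x := hB.comp x hA
    have heq : (ψ ∘ φ) =ᶠ[nhds x] id := by
      filter_upwards [hU.mem_nhds hx] with z hz using hleft z hz
    have hid : HasFDerivAt (id : (Fin n → ℝ) → (Fin n → ℝ)) (B.comp A) x :=
      hcomp.congr_of_eventuallyEq heq.symm
    have := hid.unique (hasFDerivAt_id x)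
    intro v
    have := congrArg (fun (L : (Fin n → ℝ) →L[ℝ] (Fin n → ℝ)) => L v) this
    simpa using this
  -- the error of the Taylor polynomial of φ
  set e : (Fin n → ℝ) → (Fin n → ℝ) := fun h => φ (x + h) - polyEval P h with hedef
  -- `polyEval P 0 = φ x`
  have hnormk : Filter.Tendsto (fun h : Fin n → ℝ => ‖h‖ ^ k) (nhds 0) (nhds 0) := by
    have := ((continuous_norm (E := Fin n → ℝ)).pow k).tendsto (0 : Fin n → ℝ)
    simpa [zero_pow (by omega : k ≠ 0), Pi.pow_def] using this
  have hP0 : polyEval P 0 = φ x := by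
    have he0 : Filter.Tendsto e (nhds 0) (nhds 0) := he.isBigO.trans_tendsto hnormk
    have hec : Filter.Tendsto e (nhds 0) (nhds (e 0)) := by
      have h1 : ContinuousAt (fun h : Fin n → ℝ => φ (x + h)) 0 := by
        have : ContinuousAt φ (x + 0) := by rw [add_zero]; exact hφat.continuousAt
        exact this.comp ((continuous_const.add continuous_id).continuousAt)
      exact (h1.sub ((contDiff_polyEval P).continuous.continuousAt)).tendsto
    have : e 0 = 0 := tendsto_nhds_unique hec he0
    have : φ (x + 0) - polyEval P 0 = 0 := this
    rw [add_zero] at this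
    exact (sub_eq_zero.mp this).symm
  -- the nonlinear part of the Taylor polynomial
  set Rpoly : Fin n → MvPolynomial (Fin n) ℝ :=
    fun i => P i - MvPolynomial.C (φ x i) - linPoly A i with hRpolydef
  set Rf : (Fin n → ℝ) → (Fin n → ℝ) := fun z => polyEval P z - φ x - A z with hRfdef
  have hRfpoly : polyEval Rpoly = Rf := by
    funext z i
    simp only [polyEval, hRpolydef, MvPolynomial.eval_sub, MvPolynomial.eval_C, hRfdef]
    have := congrFun (polyEval_linPoly A z) i
    simp only [polyEval] at this
    rw [this]
    rfl
  have hRf0 : Rf 0 = 0 := by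
    simp [hRfdef, hP0, map_zero]
  have hRd : HasFDerivAt Rf (0 : (Fin n → ℝ) →L[ℝ] (Fin n → ℝ)) 0 := by
    -- derivative of polyEval P at 0 is A
    have hA0 : HasFDerivAt φ A x := hA
    rw [hasFDerivAt_iff_isLittleO_nhds_zero] at hA0
    have hbig : (fun h : Fin n → ℝ => ‖h‖ ^ k) =O[nhds 0] (fun h => h) := by
      refine Asymptotics.IsBigO.of_bound 1 ?_
      filter_upwards [Metric.closedBall_mem_nhds (0 : Fin n → ℝ) one_pos] with h hh
      rw [Metric.mem_closedBall, dist_zero_right] at hh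
      have : ‖h‖ ^ k ≤ ‖h‖ ^ 1 := pow_le_pow_of_le_one (norm_nonneg _) hh (by omega)
      simpa [abs_of_nonneg (pow_nonneg (norm_nonneg h) k)] using this
    have he' : e =o[nhds 0] (fun h => h) := he.trans_isBigO hbig
    have hPd : HasFDerivAt (polyEval P) A 0 := by
      rw [hasFDerivAt_iff_isLittleO_nhds_zero]
      have := hA0.sub he'
      refine this.congr ?_ (fun _ => rfl)
      intro h
      simp only [hedef, Pi.sub_apply]
      rw [zero_add, hP0]
      abel
    have haff : HasFDerivAt (fun z : Fin n → ℝ => φ x + A z) A 0 :=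
      (A.hasFDerivAt).const_add (φ x)
    have := hPd.sub haff
    simp only [sub_self] at this
    refine this.congr_of_eventuallyEq ?_
    filter_upwards with z
    simp only [hRfdef, Pi.sub_apply]
    abel
  have hRsm : ContDiff ℝ ⊤ Rf := by
    rw [← hRfpoly]; exact contDiff_polyEval Rpoly
  obtain ⟨δR, hδR, L, hL, HR⟩ := quad_lipschitz Rf hRsm hRd.fderiv
  -- the local inverse shifted to the origin
  set g : (Fin n → ℝ) → (Fin n → ℝ) := fun u => ψ (φ x + u) - x with hgdef
  have hg0 : g 0 = 0 := by simp [hgdef, hleft x hx]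
  -- Lipschitz control on g near 0
  obtain ⟨K, t, ht, hlipψ⟩ := (hψat.of_le hk1).exists_lipschitzOnWith
  have htV : ∀ᶠ u : Fin n → ℝ in nhds 0, φ x + u ∈ t ∧ φ x + u ∈ V := by
    have htd : Filter.Tendsto (fun u : Fin n → ℝ => φ x + u) (nhds 0) (nhds (φ x)) := by
      have := Filter.Tendsto.const_add (φ x) (tendsto_id (x := nhds (0 : Fin n → ℝ)))
      simpa using this
    exact (htd.eventually_mem ht).and (htd.eventually_mem (hV.mem_nhds hyV))
  have hgbound : ∀ᶠ u : Fin n → ℝ in nhds 0, ‖g u‖ ≤ K * ‖u‖ := by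
    filter_upwards [htV] with u hu
    have h1 : φ x ∈ t := mem_of_mem_nhds ht
    have := hlipψ.norm_sub_le hu.1 h1
    have h2 : ψ (φ x) = x := hleft x hx
    calc ‖g u‖ = ‖ψ (φ x + u) - ψ (φ x)‖ := by rw [hgdef, h2]
      _ ≤ K * ‖φ x + u - φ x‖ := this
      _ = K * ‖u‖ := by rw [add_sub_cancel_left]
  have hgO : g =O[nhds 0] (fun u => ‖u‖) := by
    refine Asymptotics.IsBigO.of_bound K ?_
    filter_upwards [hgbound] with u hu
    simpa [abs_of_nonneg (norm_nonneg u)] using hu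
  have hnormtend : Filter.Tendsto (fun u : Fin n → ℝ => ‖u‖) (nhds 0) (nhds 0) := by
    simpa using (continuous_norm (E := Fin n → ℝ)).tendsto (0 : Fin n → ℝ)
  have hgtend : Filter.Tendsto g (nhds 0) (nhds 0) := hgO.trans_tendsto hnormtend
  -- key identity
  have hkey : ∀ᶠ u : Fin n → ℝ in nhds 0,
      g u = B u - B (Rf (g u)) - B (e (g u)) := by
    filter_upwards [htV] with u hu
    have hxu : x + g u = ψ (φ x + u) := by
      show x + (ψ (φ x + u) - x) = ψ (φ x + u)
      abel
    have hphi : φ (x + g u) = φ x + u := by rw [hxu]; exact hright _ hu.2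
    have hu' : u = A (g u) + Rf (g u) + e (g u) := by
      have h1 : e (g u) = φ x + u - polyEval P (g u) := by
        show φ (x + g u) - polyEval P (g u) = _
        rw [hphi]
      have h2 : Rf (g u) = polyEval P (g u) - φ x - A (g u) := rfl
      rw [h1, h2]
      abel
    have := congrArg B hu'
    rw [map_add, map_add, hBA] at this
    rw [this]
    abel
  -- eventually ‖u‖ ≤ 1
  have hsmall1 : ∀ᶠ u : Fin n → ℝ in nhds 0, ‖u‖ ≤ 1 := by
    filter_upwards [Metric.closedBall_mem_nhds (0 : Fin n → ℝ) one_pos] with u hu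
    rwa [Metric.mem_closedBall, dist_zero_right] at hu
  clear_value A B e Rf g Rpoly
  -- main induction
  have main : ∀ j : ℕ, j ≤ k →
      ((fun u => g u - polyEval (iterPoly B Rpoly j) u) =o[nhds 0] fun u => ‖u‖ ^ j) ∧
      ((fun u => polyEval (iterPoly B Rpoly j) u) =O[nhds 0] fun u => ‖u‖) := by
    intro j
    induction j with
    | zero =>
      intro _
      constructor
      · have : (fun u : Fin n → ℝ => g u - polyEval (iterPoly B Rpoly 0) u) = g := by
          funext u; rw [polyEval_iterPoly_zero]; simp
        rw [this]
        simp only [pow_zero]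
        exact (isLittleO_one_iff ℝ).mpr hgtend
      · have : (fun u : Fin n → ℝ => polyEval (iterPoly B Rpoly 0) u) = fun _ => (0 : Fin n → ℝ) := by
          funext u; rw [polyEval_iterPoly_zero]
        rw [this]
        exact isBigO_zero _ _
    | succ j ih =>
      intro hjk
      obtain ⟨herrj, hQjO⟩ := ih (by omega)
      set Qj := fun u => polyEval (iterPoly B Rpoly j) u with hQjdef
      have hQj' : ∀ u, polyEval (iterPoly B Rpoly j) u = Qj u := fun u => rfl
      clear_value Qj
      have hQjtend : Filter.Tendsto Qj (nhds 0) (nhds 0) := hQjO.trans_tendsto hnormtend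
      -- eventual smallness
      have hQjsmall : ∀ᶠ u : Fin n → ℝ in nhds 0, ‖Qj u‖ ≤ δR := by
        filter_upwards [hQjtend (Metric.closedBall_mem_nhds (0 : Fin n → ℝ) hδR)] with u hu
        rwa [Set.mem_preimage, Metric.mem_closedBall, dist_zero_right] at hu
      have hgsmall : ∀ᶠ u : Fin n → ℝ in nhds 0, ‖g u‖ ≤ δR := by
        filter_upwards [hgtend (Metric.closedBall_mem_nhds (0 : Fin n → ℝ) hδR)] with u hu
        rwa [Set.mem_preimage, Metric.mem_closedBall, dist_zero_right] at hu
      -- constants for linear bounds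
      obtain ⟨C1, hC1⟩ := hgO.bound
      obtain ⟨C2, hC2⟩ := hQjO.bound
      -- term 1 : R-difference term
      have t1 : (fun u => Rf (Qj u) - Rf (g u)) =O[nhds 0]
          fun u => ‖u‖ * ‖g u - Qj u‖ := by
        refine Asymptotics.IsBigO.of_bound (L * (C1 + C2)) ?_
        filter_upwards [hQjsmall, hgsmall, hC1, hC2, hsmall1] with u h1 h2 h3 h4 h5
        have hmax : max ‖Qj u‖ ‖g u‖ ≤ (C1 + C2) * ‖u‖ := by
          rw [Real.norm_eq_abs, abs_of_nonneg (norm_nonneg u)] at h3 h4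
          refine max_le (le_trans h4 ?_) (le_trans h3 ?_) <;> nlinarith [norm_nonneg (Qj u), norm_nonneg (g u), h3, h4]
        have := HR (Qj u) (g u) h1 h2
        have hnn : (0:ℝ) ≤ ‖Qj u - g u‖ := norm_nonneg _
        have hQg : ‖Qj u - g u‖ = ‖g u - Qj u‖ := norm_sub_rev _ _
        rw [Real.norm_eq_abs, abs_of_nonneg (by positivity : (0:ℝ) ≤ ‖u‖ * ‖g u - Qj u‖)]
        calc ‖Rf (Qj u) - Rf (g u)‖ ≤ L * (max ‖Qj u‖ ‖g u‖) * ‖Qj u - g u‖ := this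
          _ ≤ L * ((C1 + C2) * ‖u‖) * ‖Qj u - g u‖ := by
              apply mul_le_mul_of_nonneg_right _ hnn
              exact mul_le_mul_of_nonneg_left hmax hL
          _ = L * (C1 + C2) * (‖u‖ * ‖g u - Qj u‖) := by rw [hQg]; ring
      have t2 : (fun u : Fin n → ℝ => ‖u‖ * ‖g u - Qj u‖) =o[nhds 0]
          fun u => ‖u‖ ^ (j + 1) := by
        have hbase := (isBigO_refl (fun u : Fin n → ℝ => ‖u‖) (nhds 0)).mul_isLittleO
          herrj.norm_left
        refine hbase.congr (fun u => by rw [hQj']) (fun u => (pow_succ' ‖u‖ j).symm)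
      have term1 : (fun u => B (Rf (Qj u) - Rf (g u))) =o[nhds 0]
          fun u => ‖u‖ ^ (j + 1) :=
        ((B.isBigO_comp _ _).trans t1).trans_isLittleO t2
      -- term 2 : Taylor error term
      have he2 : (fun u => e (g u)) =o[nhds 0] fun u => ‖g u‖ ^ k := he.comp_tendsto hgtend
      have hnk : (fun u : Fin n → ℝ => ‖g u‖ ^ k) =O[nhds 0] fun u => ‖u‖ ^ k := by
        exact (hgO.norm_left).pow k
      have hkj : (fun u : Fin n → ℝ => ‖u‖ ^ k) =O[nhds 0] fun u => ‖u‖ ^ (j + 1) := by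
        refine Asymptotics.IsBigO.of_bound 1 ?_
        filter_upwards [hsmall1] with u hu
        rw [Real.norm_eq_abs, Real.norm_eq_abs, abs_of_nonneg (pow_nonneg (norm_nonneg u) k),
          abs_of_nonneg (pow_nonneg (norm_nonneg u) (j+1)), one_mul]
        exact pow_le_pow_of_le_one (norm_nonneg _) hu hjk
      have term2 : (fun u => B (e (g u))) =o[nhds 0] fun u => ‖u‖ ^ (j + 1) :=
        (B.isBigO_comp _ _).trans_isLittleO ((he2.trans_isBigO hnk).trans_isBigO hkj)
      -- the new error
      have hev : (fun u => g u - polyEval (iterPoly B Rpoly (j+1)) u)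
          =ᶠ[nhds 0] fun u => B (Rf (Qj u) - Rf (g u)) - B (e (g u)) := by
        filter_upwards [hkey] with u hku
        rw [polyEval_iterPoly_succ, hRfpoly, map_sub, map_sub, hQj']
        conv_lhs => rw [hku]
        abel
      have herr : (fun u => g u - polyEval (iterPoly B Rpoly (j+1)) u) =o[nhds 0]
          fun u => ‖u‖ ^ (j + 1) :=
        (term1.sub term2).congr' hev.symm EventuallyEq.rfl
      refine ⟨herr, ?_⟩
      -- big-O part
      have hpow1 : (fun u : Fin n → ℝ => ‖u‖ ^ (j + 1)) =O[nhds 0] fun u => ‖u‖ := by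
        refine Asymptotics.IsBigO.of_bound 1 ?_
        filter_upwards [hsmall1] with u hu
        rw [Real.norm_eq_abs, Real.norm_eq_abs, abs_of_nonneg (pow_nonneg (norm_nonneg u) (j+1)),
          abs_of_nonneg (norm_nonneg u), one_mul]
        calc ‖u‖ ^ (j+1) ≤ ‖u‖ ^ 1 := pow_le_pow_of_le_one (norm_nonneg _) hu (by omega)
          _ = ‖u‖ := pow_one _
      have : (fun u => polyEval (iterPoly B Rpoly (j+1)) u)
          = fun u => g u - (g u - polyEval (iterPoly B Rpoly (j+1)) u) := by
        funext u; abel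
      rw [this]
      exact hgO.sub (herr.isBigO.trans hpow1)
  have herrk := (main k le_rfl).1
  -- final polynomial
  refine ⟨fun i => MvPolynomial.C (x i) + truncP k (iterPoly B Rpoly k i), fun i => ?_, ?_⟩
  · refine le_trans (MvPolynomial.totalDegree_add _ _) (max_le ?_ (totalDegree_truncP _ _))
    simp [MvPolynomial.totalDegree_C]
  · -- the high-degree tail
    set G : Fin n → MvPolynomial (Fin n) ℝ :=
      fun i => iterPoly B Rpoly k i - truncP k (iterPoly B Rpoly k i) with hGdef
    have hGsupp : ∀ i, ∀ α ∈ (G i).support, k + 1 ≤ mdeg α := by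
      intro i α hα
      rw [MvPolynomial.mem_support_iff] at hα
      by_contra hcon
      push_neg at hcon
      have hle : mdeg α ≤ k := by omega
      apply hα
      rw [hGdef]
      simp only [MvPolynomial.coeff_sub, coeff_truncP, hle, if_true, sub_self]
    set C : ℝ := ∑ i, ∑ α ∈ (G i).support, |MvPolynomial.coeff α (G i)| with hCdef
    have hCnn : ∀ i : Fin n, (0:ℝ) ≤ ∑ α ∈ (G i).support, |MvPolynomial.coeff α (G i)| :=
      fun i => Finset.sum_nonneg fun _ _ => abs_nonneg _
    have hCC : (0:ℝ) ≤ C := Finset.sum_nonneg fun i _ => hCnn i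
    have hGbound : ∀ u : Fin n → ℝ, ‖u‖ ≤ 1 → ‖polyEval G u‖ ≤ C * ‖u‖ ^ (k+1) := by
      intro u hu
      have hCpos : (0:ℝ) ≤ C * ‖u‖ ^ (k+1) := by positivity
      rw [pi_norm_le_iff_of_nonneg hCpos]
      intro i
      have h1 := abs_eval_le (G i) (k+1) (hGsupp i) u hu
      refine le_trans h1 (mul_le_mul_of_nonneg_right ?_ (pow_nonneg (norm_nonneg _) _))
      exact Finset.single_le_sum (fun i _ => hCnn i) (Finset.mem_univ i)
    have hGO : (fun u => polyEval G u) =O[nhds 0] fun u => ‖u‖ ^ (k+1) := by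
      refine Asymptotics.IsBigO.of_bound C ?_
      filter_upwards [hsmall1] with u hu
      rw [Real.norm_eq_abs (‖u‖ ^ (k+1)), abs_of_nonneg (pow_nonneg (norm_nonneg u) _)]
      exact hGbound u hu
    have hGo : (fun u => polyEval G u) =o[nhds 0] fun u => ‖u‖ ^ k := by
      refine hGO.trans_isLittleO ?_
      rw [Asymptotics.isLittleO_iff]
      intro c hc
      have : ∀ᶠ u : Fin n → ℝ in nhds 0, ‖u‖ ≤ c := by
        filter_upwards [hnormtend (Metric.closedBall_mem_nhds (0:ℝ) hc)] with u hu
        rwa [Set.mem_preimage, Metric.mem_closedBall, dist_zero_right, Real.norm_eq_abs,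
          abs_of_nonneg (norm_nonneg u)] at hu
      filter_upwards [this] with u hu
      rw [Real.norm_eq_abs (‖u‖ ^ (k+1)), abs_of_nonneg (pow_nonneg (norm_nonneg u) _),
        Real.norm_eq_abs (‖u‖ ^ k), abs_of_nonneg (pow_nonneg (norm_nonneg u) _), pow_succ']
      exact mul_le_mul_of_nonneg_right hu (pow_nonneg (norm_nonneg u) _)
    have hsum := herrk.add hGo
    refine hsum.congr' ?_ EventuallyEq.rfl
    filter_upwards with u
    have hval : polyEval (fun i => MvPolynomial.C (x i) + truncP k (iterPoly B Rpoly k i)) u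
        = x + (polyEval (iterPoly B Rpoly k) u - polyEval G u) := by
      funext i
      simp only [polyEval, MvPolynomial.eval_add, MvPolynomial.eval_C, hGdef,
        MvPolynomial.eval_sub, Pi.add_apply, Pi.sub_apply]
      ring
    rw [hval]
    have hgu : ψ (φ x + u) = x + g u := by
      simp only [hgdef]
      abel
    rw [hgu]
    abel
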